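/- Let M₁ : F₁ × S₁ → ℝ and M₂ : F₂ × S₂ → ℝ be nonnegative matrices, R : F₁ × F₂ → ℝ₊ and C : S₂ × S₁ → ℝ₊ nonnegative matrices, and t : F₁ → ℝ₊ a nonnegative vector, such that M₁(f,s) = Σ_{g,u} R(f,g) M₂(g,u) C(u,s) + t(f) for all f, s, and Σ_u C(u,s) = 1 for all s ∈ S₁. Suppose M₂ admits a size-d SDP factorization: there are d×d real positive semidefinite matrices T_g (g ∈ F₂) and U_u (u ∈ S₂) and μ : F₂ → ℝ₊ with M₂(g,u) = tr(T_g U_u) + μ(g). Then M₁ admits a size-d SDP factorization: the matrices T̂_f := Σ_g R(f,g) T_g and Û_s := Σ_u U_u C(u,s) are positive semidefinite, the numbers μ̂(f) := Σ_g R(f,g) μ(g) + t(f) are nonnegative, and M₁(f,s) = tr(T̂_f Û_s) + μ̂(f) for all f ∈ F₁, s ∈ S₁. -/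

import Mathlib

open Matrix

lemma psd_smul_aux {d : ℕ} {A : Matrix (Fin d) (Fin d) ℝ} (hA : A.PosSemidef) {c : ℝ}
    (hc : 0 ≤ c) : (c • A).PosSemidef := by
  refine ⟨by rw [Matrix.IsHermitian, Matrix.conjTranspose_smul, hA.1.eq]; simp, fun x => ?_⟩
  exact (hA.smul hc).2 x

lemma psd_sum_aux {ι : Type*} [Fintype ι] {d : ℕ} (A : ι → Matrix (Fin d) (Fin d) ℝ)
    (c : ι → ℝ) (hA : ∀ i, (A i).PosSemidef) (hc : ∀ i, 0 ≤ c i) :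
    (∑ i, c i • A i).PosSemidef := by
  classical
  refine Finset.sum_induction _ _ (fun a b ha hb => ha.add hb) Matrix.PosSemidef.zero
    (fun i _ => psd_smul_aux (hA i) (hc i))

/-- Matrix form of affine reductions for SDPs: if `M₁ = R·M₂·C + t𝟙` with `R, C, t`
nonnegative and the columns of `C` summing to `1`, then any size-`d` SDP factorization
`M₂(g,u) = tr(T_g U_u) + μ(g)` of `M₂` (with `T_g, U_u` psd and `μ ≥ 0`) yields a
size-`d` SDP factorization of `M₁` with `T̂_f = ∑ g, R(f,g) T_g`,
`Û_s = ∑ u, C(u,s) U_u` and `μ̂(f) = ∑ g, R(f,g) μ(g) + t(f)`. -/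
theorem sdp_factorization_reduction {F₁ S₁ F₂ S₂ : Type*} [Fintype F₂] [Fintype S₂] {d : ℕ}
    (M₁ : F₁ → S₁ → ℝ) (M₂ : F₂ → S₂ → ℝ)
    (R : F₁ → F₂ → ℝ) (C : S₂ → S₁ → ℝ) (t : F₁ → ℝ)
    (hM₁ : ∀ f s, 0 ≤ M₁ f s) (hM₂ : ∀ g u, 0 ≤ M₂ g u)
    (hR : ∀ f g, 0 ≤ R f g) (hC : ∀ u s, 0 ≤ C u s) (ht : ∀ f, 0 ≤ t f)
    (hred : ∀ f s, M₁ f s = (∑ g, ∑ u, R f g * M₂ g u * C u s) + t f)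
    (hcol : ∀ s, ∑ u, C u s = 1)
    (T : F₂ → Matrix (Fin d) (Fin d) ℝ) (U : S₂ → Matrix (Fin d) (Fin d) ℝ) (μ : F₂ → ℝ)
    (hT : ∀ g, (T g).PosSemidef) (hU : ∀ u, (U u).PosSemidef) (hμ : ∀ g, 0 ≤ μ g)
    (hfact : ∀ g u, M₂ g u = (T g * U u).trace + μ g) :
    (∀ f, (∑ g, R f g • T g).PosSemidef) ∧
    (∀ s, (∑ u, C u s • U u).PosSemidef) ∧
    (∀ f, 0 ≤ (∑ g, R f g * μ g) + t f) ∧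
    (∀ f s, M₁ f s = ((∑ g, R f g • T g) * (∑ u, C u s • U u)).trace
        + ((∑ g, R f g * μ g) + t f)) := by
  refine ⟨fun f => psd_sum_aux _ _ hT (hR f), fun s => psd_sum_aux _ _ hU (hC · s), fun f => ?_,
    fun f s => ?_⟩
  · have : 0 ≤ ∑ g, R f g * μ g :=
      Finset.sum_nonneg fun g _ => mul_nonneg (hR f g) (hμ g)
    linarith [ht f]
  · have htr : ((∑ g, R f g • T g) * (∑ u, C u s • U u)).trace
        = ∑ g, ∑ u, R f g * (T g * U u).trace * C u s := by
      rw [Finset.sum_mul_sum, Matrix.trace_sum]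
      refine Finset.sum_congr rfl fun g _ => ?_
      rw [Matrix.trace_sum]
      refine Finset.sum_congr rfl fun u _ => ?_
      rw [Matrix.smul_mul, Matrix.mul_smul, Matrix.trace_smul, Matrix.trace_smul]
      simp [mul_comm, mul_assoc, mul_left_comm]
    rw [hred f s, htr]
    have : ∀ g, ∑ u, R f g * M₂ g u * C u s
        = (∑ u, R f g * (T g * U u).trace * C u s) + R f g * μ g := by
      intro g
      have : ∀ u, R f g * M₂ g u * C u s
          = R f g * (T g * U u).trace * C u s + R f g * μ g * C u s := by
        intro u; rw [hfact g u]; ring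
      rw [Finset.sum_congr rfl fun u _ => this u, Finset.sum_add_distrib,
        ← Finset.mul_sum, hcol s, mul_one]
    rw [Finset.sum_congr rfl fun g _ => this g, Finset.sum_add_distrib]
    ring
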